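/- Let n ≥ 6 be an integer and let z : ZMod n → ℝ be injective such that u_e(z) > 0 for every chord e of length 2 and u_{{0,3}}(z) < 0 (so {0,3} is a shortest negative chord). Let τ ∈ Perm(ZMod n) be the transposition exchanging 1 and 3. Then Neg(z ∘ τ) < Neg(z). -/

import Mathlib

namespace M0n

/-- `{i, j}` is a chord of the `n`-gon: `j ∉ {i-1, i, i+1}`. -/
def IsChord (n : ℕ) (p : Sym2 (ZMod n)) : Prop :=
  ∀ i j : ZMod n, p = s(i, j) → j ≠ i - 1 ∧ j ≠ i ∧ j ≠ i + 1

instance (n : ℕ) [NeZero n] : DecidablePred (IsChord n) := fun p =>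
  inferInstanceAs (Decidable (∀ i j : ZMod n, p = s(i, j) → j ≠ i - 1 ∧ j ≠ i ∧ j ≠ i + 1))

/-- The finite set `E` of chords of the `n`-gon. -/
def chords (n : ℕ) [NeZero n] : Finset (Sym2 (ZMod n)) :=
  Finset.univ.filter (IsChord n)

/-- `x` lies in the cyclic open interval `{i+1, …, j-1}` from `i` to `j`. -/
def CycBtw {n : ℕ} (i x j : ZMod n) : Prop :=
  0 < (x - i).val ∧ (x - i).val < (j - i).val

instance {n : ℕ} (i x j : ZMod n) : Decidable (CycBtw i x j) :=
  inferInstanceAs (Decidable (0 < (x - i).val ∧ (x - i).val < (j - i).val))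

/-- Two chords cross: exactly one endpoint of `q` lies in the cyclic open interval
from `i` to `j`, for every ordered representation `(i, j)` of `p`. -/
def Crosses (n : ℕ) (p q : Sym2 (ZMod n)) : Prop :=
  ∀ i j k l : ZMod n, p = s(i, j) → q = s(k, l) → Xor (CycBtw i k j) (CycBtw i l j)

instance (n : ℕ) [NeZero n] (p q : Sym2 (ZMod n)) : Decidable (Crosses n p q) :=
  inferInstanceAs (Decidable (∀ i j k l : ZMod n,
    p = s(i, j) → q = s(k, l) → Xor (CycBtw i k j) (CycBtw i l j)))

/-- The dihedral coordinate (cross-ratio)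
`u_{ij}(z) = ((z i - z (j+1)) (z (i+1) - z j)) / ((z i - z j) (z (i+1) - z (j+1)))`,
well defined on unordered pairs. -/
def u {n : ℕ} {K : Type*} [Field K] (z : ZMod n → K) : Sym2 (ZMod n) → K :=
  Sym2.lift ⟨fun i j =>
    ((z i - z (j + 1)) * (z (i + 1) - z j)) / ((z i - z j) * (z (i + 1) - z (j + 1))), by
      intro i j
      have h1 : (z i - z (j + 1)) * (z (i + 1) - z j)
          = (z j - z (i + 1)) * (z (j + 1) - z i) := by ring
      have h2 : (z i - z j) * (z (i + 1) - z (j + 1))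
          = (z j - z i) * (z (j + 1) - z (i + 1)) := by ring
      dsimp only
      rw [h1, h2]⟩

/-- The cyclic interval `{a, a+1, …, a+m-1}` in `ZMod n`. -/
def cycInt {n : ℕ} (a : ZMod n) (m : ℕ) : Finset (ZMod n) :=
  (Finset.range m).image fun t : ℕ => a + (t : ZMod n)

/-- A partition of `ZMod n` into four nonempty cyclic intervals `A, B, C, D`
appearing in this cyclic order. -/
structure CyclicFourPartition (n : ℕ) where
  a : ZMod n
  p : ℕ
  q : ℕ
  r : ℕ
  t : ℕ
  hp : 0 < p
  hq : 0 < q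
  hr : 0 < r
  ht : 0 < t
  hsum : p + q + r + t = n

namespace CyclicFourPartition

variable {n : ℕ} (P : CyclicFourPartition n)

def A : Finset (ZMod n) := cycInt P.a P.p
def B : Finset (ZMod n) := cycInt (P.a + (P.p : ZMod n)) P.q
def C : Finset (ZMod n) := cycInt (P.a + (P.p : ZMod n) + (P.q : ZMod n)) P.r
def D : Finset (ZMod n) := cycInt (P.a + (P.p : ZMod n) + (P.q : ZMod n) + (P.r : ZMod n)) P.t

end CyclicFourPartition

/-- A sign pattern is consistent if it does not contradict any extended u-relation:
for every cyclic 4-partition `(A,B,C,D)`, one of the two products of signs is `1`. -/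
def Consistent (n : ℕ) (s : Sym2 (ZMod n) → ℤ) : Prop :=
  ∀ P : CyclicFourPartition n,
    (∏ x ∈ P.A, ∏ y ∈ P.C, s s(x, y)) = 1 ∨ (∏ x ∈ P.B, ∏ y ∈ P.D, s s(x, y)) = 1

/-- A sign pattern is realizable if it is the sign vector of the dihedral coordinates
of some injective real configuration. -/
def Realizable (n : ℕ) [NeZero n] (s : Sym2 (ZMod n) → ℤ) : Prop :=
  ∃ z : ZMod n → ℝ, Function.Injective z ∧ ∀ e ∈ chords n, Real.sign (u z e) = (s e : ℝ)

/-- The length of a chord `{i,j}`: `min (d, n - d)` where `d = (j - i).val`. -/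
def chordLength (n : ℕ) (p : Sym2 (ZMod n)) : ℕ :=
  Sym2.lift ⟨fun i j => min (j - i).val (i - j).val, fun _ _ => min_comm _ _⟩ p

/-- `Neg z`: the number of negative chords of a real configuration. -/
noncomputable def negCount (n : ℕ) [NeZero n] (z : ZMod n → ℝ) : ℕ :=
  Set.ncard {e : Sym2 (ZMod n) | e ∈ chords n ∧ u z e < 0}

/-- The set of real points of `M_{0,n}` in its dihedral embedding:
nowhere-zero real solutions of all primitive u-relations in `ℝ^E`. -/
def Vset (n : ℕ) [NeZero n] : Set ({e : Sym2 (ZMod n) // e ∈ chords n} → ℝ) :=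
  {w | (∀ c, w c ≠ 0) ∧ ∀ c,
    w c + ∏ e ∈ Finset.univ.filter
        (fun e : {e : Sym2 (ZMod n) // e ∈ chords n} => Crosses n e.1 c.1), w e = 1}

/-- The part `M_{0,n}(ℝ_s)` of `V` in the open orthant given by the sign pattern `s`. -/
def VsSet (n : ℕ) [NeZero n] (s : Sym2 (ZMod n) → ℤ) :
    Set ({e : Sym2 (ZMod n) // e ∈ chords n} → ℝ) :=
  {w ∈ Vset n | ∀ c : {e : Sym2 (ZMod n) // e ∈ chords n}, Real.sign (w c) = (s c.1 : ℝ)}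



/-- `Q p q x y` is the product whose sign is the sign of the cross-ratio of pairs `(p,q)`,`(x,y)`. -/
def Q (p q x y : ℝ) : ℝ := (x - p) * (x - q) * ((y - p) * (y - q))

lemma pm_neg {t p q : ℝ} (h : (t - p) * (t - q) < 0) :
    (p < t ∧ t < q) ∨ (q < t ∧ t < p) := by
  rcases lt_trichotomy p t with h1 | h1 | h1
  · exact Or.inl ⟨h1, by nlinarith⟩
  · exfalso; subst h1; nlinarith
  · exact Or.inr ⟨by nlinarith, h1⟩

lemma pm_pos {t p q : ℝ} (h : 0 < (t - p) * (t - q)) :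
    (t < p ∧ t < q) ∨ (p < t ∧ q < t) := by
  rcases lt_trichotomy t p with h1 | h1 | h1
  · exact Or.inl ⟨h1, by nlinarith⟩
  · exfalso; subst h1; nlinarith
  · exact Or.inr ⟨h1, by nlinarith⟩

/-- If `p, q` lie strictly between `x` and `y` and `r` does not, then `r` is outside `I(p,q)`. -/
lemma out2 {x y p q r : ℝ} (hp : (p - x) * (p - y) < 0) (hq : (q - x) * (q - y) < 0)
    (hr : 0 < (r - x) * (r - y)) : 0 < (r - p) * (r - q) := by
  rcases pm_neg hp with ⟨h1, h2⟩ | ⟨h1, h2⟩ <;>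
    rcases pm_neg hq with ⟨h3, h4⟩ | ⟨h3, h4⟩ <;>
    rcases pm_pos hr with ⟨h5, h6⟩ | ⟨h5, h6⟩ <;>
    nlinarith

/-- If `p, q` lie strictly between `x` and `y`, then `x` is outside `I(p,q)`. -/
lemma end2 {x y p q : ℝ} (hp : (p - x) * (p - y) < 0) (hq : (q - x) * (q - y) < 0) :
    0 < (x - p) * (x - q) := by
  rcases pm_neg hp with ⟨h1, h2⟩ | ⟨h1, h2⟩ <;>
    rcases pm_neg hq with ⟨h3, h4⟩ | ⟨h3, h4⟩ <;>
    nlinarith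

/-- If `p,q ∈ I(x,y)` and `t ∈ I(p,q)` then `t ∈ I(x,y)`. -/
lemma sub_int {x y p q t : ℝ} (hp : (p - x) * (p - y) < 0) (hq : (q - x) * (q - y) < 0)
    (ht : (t - p) * (t - q) < 0) : (t - x) * (t - y) < 0 := by
  rcases lt_trichotomy ((t - x) * (t - y)) 0 with h | h | h
  · exact h
  · exfalso
    rcases mul_eq_zero.mp h with h' | h'
    · have hx : t = x := by have := sub_eq_zero.mp h'; linarith
      rw [hx] at ht
      nlinarith [end2 hp hq]
    · have hy : t = y := by have := sub_eq_zero.mp h'; linarith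
      rw [hy] at ht
      have hp' : (p - y) * (p - x) < 0 := by nlinarith
      have hq' : (q - y) * (q - x) < 0 := by nlinarith
      nlinarith [end2 hp' hq']
  · exact absurd (out2 hp hq h) (by nlinarith [ht])


namespace M0nGeo

lemma same_side {e f a b d : ℝ} (ha : 0 < (a - e) * (a - f)) (hb : 0 < (b - e) * (b - f))
    (hd : (d - e) * (d - f) < 0) : 0 < (d - a) * (d - b) * ((e - a) * (e - b)) := by
  rcases pm_pos ha with ⟨ha1, ha2⟩ | ⟨ha1, ha2⟩ <;>
    rcases pm_pos hb with ⟨hb1, hb2⟩ | ⟨hb1, hb2⟩ <;>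
      rcases pm_neg hd with ⟨hd1, hd2⟩ | ⟨hd1, hd2⟩ <;>
  all_goals
    first
    | (have t1 : 0 < (d - a) * (d - b) := by nlinarith
       have t2 : 0 < (e - a) * (e - b) := by nlinarith
       nlinarith)
    | (have t1 : (d - a) * (d - b) < 0 := by nlinarith
       have t2 : (e - a) * (e - b) < 0 := by nlinarith
       nlinarith)

lemma key {a b d e x y : ℝ} (h1 : Q a b d e < 0) (h2 : 0 < Q a b x y) (h3 : 0 < Q d e x y) :
    0 < Q b d x y := by
  have h2' : 0 < ((a - x) * (a - y)) * ((b - x) * (b - y)) := by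
    have hq : ((a - x) * (a - y)) * ((b - x) * (b - y)) = Q a b x y := by unfold Q; ring
    rw [hq]; exact h2
  have h3' : 0 < ((d - x) * (d - y)) * ((e - x) * (e - y)) := by
    have hq : ((d - x) * (d - y)) * ((e - x) * (e - y)) = Q d e x y := by unfold Q; ring
    rw [hq]; exact h3
  have hgoal : Q b d x y = ((b - x) * (b - y)) * ((d - x) * (d - y)) := by unfold Q; ring
  rw [hgoal]
  rcases mul_pos_iff.mp h2' with ⟨hA, hB⟩ | ⟨hA, hB⟩ <;>
    rcases mul_pos_iff.mp h3' with ⟨hD, hE⟩ | ⟨hD, hE⟩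
  · exact mul_pos hB hD
  · exfalso
    have o1 := out2 hD hE hA
    have o2 := out2 hD hE hB
    have hc : 0 < Q a b d e := by
      have hq : Q a b d e = ((a - d) * (a - e)) * ((b - d) * (b - e)) := by unfold Q; ring
      rw [hq]; exact mul_pos o1 o2
    linarith
  · exfalso
    have o1 := out2 hA hB hD
    have o2 := out2 hA hB hE
    have hc : 0 < Q a b d e := by
      have hq : Q a b d e = ((d - a) * (d - b)) * ((e - a) * (e - b)) := by unfold Q; ring
      rw [hq]; exact mul_pos o1 o2
    linarith
  · exact mul_pos_of_neg_of_neg hB hD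

lemma L4geom {a b c d e f : ℝ} (h03 : Q a b d e < 0) (hab : 0 < Q a b e f)
    (hbc : Q b c e f < 0) (hcd : 0 < Q c d e f) : False := by
  have hab' : 0 < ((a - e) * (a - f)) * ((b - e) * (b - f)) := by
    have hq : ((a - e) * (a - f)) * ((b - e) * (b - f)) = Q a b e f := by unfold Q; ring
    rw [hq]; exact hab
  have hbc' : ((b - e) * (b - f)) * ((c - e) * (c - f)) < 0 := by
    have hq : ((b - e) * (b - f)) * ((c - e) * (c - f)) = Q b c e f := by unfold Q; ring
    rw [hq]; exact hbc
  have hcd' : 0 < ((c - e) * (c - f)) * ((d - e) * (d - f)) := by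
    have hq : ((c - e) * (c - f)) * ((d - e) * (d - f)) = Q c d e f := by unfold Q; ring
    rw [hq]; exact hcd
  rcases mul_pos_iff.mp hab' with ⟨hA, hB⟩ | ⟨hA, hB⟩
  · have hC : (c - e) * (c - f) < 0 := by nlinarith
    have hD : (d - e) * (d - f) < 0 := by nlinarith
    have hs := same_side hA hB hD
    have hc : 0 < Q a b d e := by
      have hq : Q a b d e = (d - a) * (d - b) * ((e - a) * (e - b)) := by unfold Q; ring
      rw [hq]; exact hs
    linarith
  · have hC : 0 < (c - e) * (c - f) := by nlinarith
    have hD : 0 < (d - e) * (d - f) := by nlinarith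
    have o1 := out2 hA hB hD
    have e1 := end2 hA hB
    have hc : 0 < Q a b d e := by
      have hq : Q a b d e = ((d - a) * (d - b)) * ((e - a) * (e - b)) := by unfold Q; ring
      rw [hq]; exact mul_pos o1 e1
    linarith

lemma L5geom {a b c d e g : ℝ} (heg : e ≠ g) (hea : e ≠ a)
    (h03 : Q a b d e < 0) (hbc : 0 < Q b c g a) (hcd : Q c d g a < 0) : Q d e g a < 0 := by
  have hbc' : 0 < ((b - g) * (b - a)) * ((c - g) * (c - a)) := by
    have hq : ((b - g) * (b - a)) * ((c - g) * (c - a)) = Q b c g a := by unfold Q; ring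
    rw [hq]; exact hbc
  have hcd' : ((c - g) * (c - a)) * ((d - g) * (d - a)) < 0 := by
    have hq : ((c - g) * (c - a)) * ((d - g) * (d - a)) = Q c d g a := by unfold Q; ring
    rw [hq]; exact hcd
  have h03' : ((a - d) * (a - e)) * ((b - d) * (b - e)) < 0 := by
    have hq : ((a - d) * (a - e)) * ((b - d) * (b - e)) = Q a b d e := by unfold Q; ring
    rw [hq]; exact h03
  have hgoal : Q d e g a = ((d - g) * (d - a)) * ((e - g) * (e - a)) := by unfold Q; ring
  rw [hgoal]
  have hene : (e - g) * (e - a) ≠ 0 :=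
    mul_ne_zero (sub_ne_zero.mpr heg) (sub_ne_zero.mpr hea)
  rcases mul_pos_iff.mp hbc' with ⟨hB, hC⟩ | ⟨hB, hC⟩
  · -- b, c outside I(g,a); d inside
    have hD : (d - g) * (d - a) < 0 := by nlinarith
    have hE : 0 < (e - g) * (e - a) := by
      rcases lt_trichotomy ((e - g) * (e - a)) 0 with hE' | hE' | hE'
      · exfalso
        have hD2 : (d - a) * (d - g) < 0 := by nlinarith
        have hE2 : (e - a) * (e - g) < 0 := by nlinarith
        have ha' : 0 < (a - d) * (a - e) := end2 hD2 hE2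
        have hb' : (b - d) * (b - e) < 0 := by nlinarith
        have hbin : (b - g) * (b - a) < 0 := sub_int hD hE' hb'
        linarith
      · exact absurd hE' hene
      · exact hE'
    exact mul_neg_of_neg_of_pos hD hE
  · -- b, c inside I(g,a); d outside
    have hD : 0 < (d - g) * (d - a) := by nlinarith
    have hE : (e - g) * (e - a) < 0 := by
      rcases lt_trichotomy ((e - g) * (e - a)) 0 with hE' | hE' | hE'
      · exact hE'
      · exact absurd hE' hene
      · exfalso
        rcases mul_neg_iff.mp h03' with ⟨p1, p2⟩ | ⟨p1, p2⟩
        · rcases pm_pos p1 with ⟨q1, q2⟩ | ⟨q1, q2⟩ <;>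
            rcases pm_neg p2 with ⟨q3, q4⟩ | ⟨q3, q4⟩ <;>
            rcases pm_pos hD with ⟨hd1, hd2⟩ | ⟨hd1, hd2⟩ <;>
            rcases pm_pos hE' with ⟨he1, he2⟩ | ⟨he1, he2⟩ <;>
            rcases pm_neg hB with ⟨hb1, hb2⟩ | ⟨hb1, hb2⟩ <;>
            linarith
        · rcases pm_neg p1 with ⟨q1, q2⟩ | ⟨q1, q2⟩ <;>
            rcases pm_pos p2 with ⟨q3, q4⟩ | ⟨q3, q4⟩ <;>
            rcases pm_pos hD with ⟨hd1, hd2⟩ | ⟨hd1, hd2⟩ <;>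
            rcases pm_pos hE' with ⟨he1, he2⟩ | ⟨he1, he2⟩ <;>
            rcases pm_neg hB with ⟨hb1, hb2⟩ | ⟨hb1, hb2⟩ <;>
            linarith
    exact mul_neg_of_pos_of_neg hD hE

end M0nGeo

namespace M0nGeo

lemma inner_core {a b c d e : ℝ} (hab : a < b) (h02 : 0 < Q a b c d) (h13 : 0 < Q b c d e)
    (h03 : Q a b d e < 0) : 0 < Q a d c b ∧ 0 < Q d c b e ∧ 0 < Q a d b e := by
  have h02' : 0 < ((c - a) * (c - b)) * ((d - a) * (d - b)) := h02
  have h13' : 0 < ((d - b) * (d - c)) * ((e - b) * (e - c)) := h13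
  have h03' : ((d - a) * (d - b)) * ((e - a) * (e - b)) < 0 := h03
  have g1 : Q a d c b = ((c - a) * (c - d)) * ((b - a) * (b - d)) := by unfold Q; ring
  have g2 : Q d c b e = ((b - d) * (b - c)) * ((e - d) * (e - c)) := by unfold Q; ring
  have g3 : Q a d b e = ((b - a) * (b - d)) * ((e - a) * (e - d)) := by unfold Q; ring
  rw [g1, g2, g3]
  rcases mul_neg_iff.mp h03' with ⟨hd, he⟩ | ⟨hd, he⟩
  · -- d outside, e inside
    have he' : a < e ∧ e < b := by
      rcases pm_neg he with h | ⟨h1, h2⟩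
      · exact h
      · exact absurd hab (by linarith)
    obtain ⟨he1, he2⟩ := he'
    have hc : 0 < (c - a) * (c - b) := by
      rcases mul_pos_iff.mp h02' with ⟨h1, h2⟩ | ⟨h1, h2⟩
      · exact h1
      · exact absurd hd (by linarith)
    rcases pm_pos hc with ⟨hc1, hc2⟩ | ⟨hc1, hc2⟩ <;>
      rcases pm_pos hd with ⟨hd1, hd2⟩ | ⟨hd1, hd2⟩
    · -- c < a, d < a
      have t2 : (e - b) * (e - c) < 0 :=
        mul_neg_of_neg_of_pos (by linarith) (by linarith)
      have t3 : (d - b) * (d - c) < 0 := by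
        rcases mul_pos_iff.mp h13' with ⟨h1, h2⟩ | ⟨h1, h2⟩
        · exact absurd h2 (by linarith)
        · exact h1
      have hcd : c < d := by
        rcases pm_neg t3 with ⟨h1, h2⟩ | ⟨h1, h2⟩
        · exact absurd h1 (by linarith)
        · exact h1
      refine ⟨?_, ?_, ?_⟩
      · exact mul_pos (mul_pos_of_neg_of_neg (by linarith) (by linarith))
          (mul_pos (by linarith) (by linarith))
      · exact mul_pos (mul_pos (by linarith) (by linarith))
          (mul_pos (by linarith) (by linarith))
      · exact mul_pos (mul_pos (by linarith) (by linarith))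
          (mul_pos (by linarith) (by linarith))
    · -- c < a, b < d : impossible
      exfalso
      have t1 : 0 < (d - b) * (d - c) := mul_pos (by linarith) (by linarith)
      have t2 : (e - b) * (e - c) < 0 :=
        mul_neg_of_neg_of_pos (by linarith) (by linarith)
      rcases mul_pos_iff.mp h13' with ⟨h1, h2⟩ | ⟨h1, h2⟩
      · linarith
      · linarith
    · -- b < c, d < a
      refine ⟨?_, ?_, ?_⟩
      · exact mul_pos (mul_pos (by linarith) (by linarith))
          (mul_pos (by linarith) (by linarith))
      · exact mul_pos_of_neg_of_neg
          (mul_neg_of_pos_of_neg (by linarith) (by linarith))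
          (mul_neg_of_pos_of_neg (by linarith) (by linarith))
      · exact mul_pos (mul_pos (by linarith) (by linarith))
          (mul_pos (by linarith) (by linarith))
    · -- b < c, b < d
      have t2 : 0 < (e - b) * (e - c) :=
        mul_pos_of_neg_of_neg (by linarith) (by linarith)
      have t3 : 0 < (d - b) * (d - c) := by
        rcases mul_pos_iff.mp h13' with ⟨h1, h2⟩ | ⟨h1, h2⟩
        · exact h1
        · exact absurd t2 (by linarith)
      have hcd : c < d := by
        rcases pm_pos t3 with ⟨h1, h2⟩ | ⟨h1, h2⟩
        · exact absurd h1 (by linarith)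
        · exact h2
      refine ⟨?_, ?_, ?_⟩
      · exact mul_pos_of_neg_of_neg
          (mul_neg_of_pos_of_neg (by linarith) (by linarith))
          (mul_neg_of_pos_of_neg (by linarith) (by linarith))
      · exact mul_pos (mul_pos_of_neg_of_neg (by linarith) (by linarith))
          (mul_pos_of_neg_of_neg (by linarith) (by linarith))
      · exact mul_pos_of_neg_of_neg
          (mul_neg_of_pos_of_neg (by linarith) (by linarith))
          (mul_neg_of_pos_of_neg (by linarith) (by linarith))
  · -- d inside, e outside
    have hd' : a < d ∧ d < b := by
      rcases pm_neg hd with h | ⟨h1, h2⟩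
      · exact h
      · exact absurd hab (by linarith)
    obtain ⟨hd1, hd2⟩ := hd'
    have hc : (c - a) * (c - b) < 0 := by
      rcases mul_pos_iff.mp h02' with ⟨h1, h2⟩ | ⟨h1, h2⟩
      · exact absurd hd (by linarith)
      · exact h1
    have hc' : a < c ∧ c < b := by
      rcases pm_neg hc with h | ⟨h1, h2⟩
      · exact h
      · exact absurd hab (by linarith)
    obtain ⟨hc1, hc2⟩ := hc'
    rcases pm_pos he with ⟨he1, he2⟩ | ⟨he1, he2⟩
    · -- e < a
      have t2 : 0 < (e - b) * (e - c) :=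
        mul_pos_of_neg_of_neg (by linarith) (by linarith)
      have t3 : 0 < (d - b) * (d - c) := by
        rcases mul_pos_iff.mp h13' with ⟨h1, h2⟩ | ⟨h1, h2⟩
        · exact h1
        · exact absurd t2 (by linarith)
      have hdc : d < c := by
        rcases pm_pos t3 with ⟨h1, h2⟩ | ⟨h1, h2⟩
        · exact h2
        · exact absurd h1 (by linarith)
      refine ⟨?_, ?_, ?_⟩
      · exact mul_pos (mul_pos (by linarith) (by linarith))
          (mul_pos (by linarith) (by linarith))
      · exact mul_pos (mul_pos (by linarith) (by linarith))
          (mul_pos_of_neg_of_neg (by linarith) (by linarith))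
      · exact mul_pos (mul_pos (by linarith) (by linarith))
          (mul_pos_of_neg_of_neg (by linarith) (by linarith))
    · -- b < e
      have t2 : 0 < (e - b) * (e - c) := mul_pos (by linarith) (by linarith)
      have t3 : 0 < (d - b) * (d - c) := by
        rcases mul_pos_iff.mp h13' with ⟨h1, h2⟩ | ⟨h1, h2⟩
        · exact h1
        · exact absurd t2 (by linarith)
      have hdc : d < c := by
        rcases pm_pos t3 with ⟨h1, h2⟩ | ⟨h1, h2⟩
        · exact h2
        · exact absurd h1 (by linarith)
      refine ⟨?_, ?_, ?_⟩
      · exact mul_pos (mul_pos (by linarith) (by linarith))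
          (mul_pos (by linarith) (by linarith))
      · exact mul_pos (mul_pos (by linarith) (by linarith))
          (mul_pos (by linarith) (by linarith))
      · exact mul_pos (mul_pos (by linarith) (by linarith))
          (mul_pos (by linarith) (by linarith))

lemma Q_neg_reflect (p q x y : ℝ) : Q (-p) (-q) (-x) (-y) = Q p q x y := by unfold Q; ring

lemma inner {a b c d e : ℝ} (h02 : 0 < Q a b c d) (h13 : 0 < Q b c d e)
    (h03 : Q a b d e < 0) : 0 < Q a d c b ∧ 0 < Q d c b e ∧ 0 < Q a d b e := by
  have hab : a ≠ b := by
    rintro rfl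
    have : Q a a d e = ((d - a) * (e - a)) ^ 2 := by unfold Q; ring
    rw [this] at h03
    nlinarith [sq_nonneg ((d - a) * (e - a))]
  rcases lt_or_gt_of_ne hab with h | h
  · exact inner_core h h02 h13 h03
  · have hr := inner_core (a := -a) (b := -b) (c := -c) (d := -d) (e := -e) (by linarith)
      (by rw [Q_neg_reflect]; exact h02) (by rw [Q_neg_reflect]; exact h13)
      (by rw [Q_neg_reflect]; exact h03)
    rcases hr with ⟨t1, t2, t3⟩
    rw [Q_neg_reflect] at t1 t2 t3
    exact ⟨t1, t2, t3⟩

end M0nGeo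


lemma u_eval {n : ℕ} {K : Type*} [Field K] (z : ZMod n → K) (i j : ZMod n) :
    u z s(i, j) =
      ((z i - z (j + 1)) * (z (i + 1) - z j)) / ((z i - z j) * (z (i + 1) - z (j + 1))) :=
  Sym2.lift_mk _ i j

lemma u_lt_iff {n : ℕ} (z : ZMod n → ℝ) {i j : ZMod n}
    (h1 : z i ≠ z j) (h2 : z i ≠ z (j + 1)) (h3 : z (i + 1) ≠ z j) (h4 : z (i + 1) ≠ z (j + 1)) :
    (u z s(i, j) < 0 ↔ Q (z i) (z (i + 1)) (z j) (z (j + 1)) < 0) ∧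
      (0 < u z s(i, j) ↔ 0 < Q (z i) (z (i + 1)) (z j) (z (j + 1))) ∧ u z s(i, j) ≠ 0 := by
  rw [u_eval]
  have hN : (z i - z (j + 1)) * (z (i + 1) - z j) ≠ 0 :=
    mul_ne_zero (sub_ne_zero.mpr h2) (sub_ne_zero.mpr h3)
  have hD : (z i - z j) * (z (i + 1) - z (j + 1)) ≠ 0 :=
    mul_ne_zero (sub_ne_zero.mpr h1) (sub_ne_zero.mpr h4)
  have hQ : Q (z i) (z (i + 1)) (z j) (z (j + 1)) =
      ((z i - z (j + 1)) * (z (i + 1) - z j)) * ((z i - z j) * (z (i + 1) - z (j + 1))) := by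
    unfold Q; ring
  refine ⟨?_, ?_, div_ne_zero hN hD⟩
  · rw [hQ, mul_neg_iff, div_neg_iff]
  · rw [hQ, mul_pos_iff, div_pos_iff]

lemma cast_ne {n : ℕ} [NeZero n] {k m : ℕ} (hk : k < n) (hm : m < n) (h : k ≠ m) :
    (k : ZMod n) ≠ (m : ZMod n) := by
  intro he
  apply h
  have hv := congrArg ZMod.val he
  rwa [ZMod.val_cast_of_lt hk, ZMod.val_cast_of_lt hm] at hv

lemma neg_two_eq {n : ℕ} [NeZero n] (h : 2 ≤ n) : ((n - 2 : ℕ) : ZMod n) = (-2 : ZMod n) := by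
  have h' : ((n - 2 : ℕ) : ZMod n) = (n : ZMod n) - 2 := by
    push_cast [h]
    ring
  rw [h', ZMod.natCast_self, zero_sub]

lemma val_two' {n : ℕ} [NeZero n] (h : 2 < n) : (2 : ZMod n).val = 2 := by
  have : ((2 : ℕ) : ZMod n).val = 2 := ZMod.val_cast_of_lt h
  simpa using this

lemma val_neg_two {n : ℕ} [NeZero n] (h : 2 ≤ n) : (-2 : ZMod n).val = n - 2 := by
  rw [← neg_two_eq h]
  exact ZMod.val_cast_of_lt (by omega)

lemma chordLength_add_two {n : ℕ} [NeZero n] (hn : 6 ≤ n) (i : ZMod n) :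
    chordLength n s(i, i + 2) = 2 := by
  have e1 : i + 2 - i = (2 : ZMod n) := by ring
  have e2 : i - (i + 2) = (-2 : ZMod n) := by ring
  unfold chordLength
  rw [Sym2.lift_mk]
  simp only [e1, e2]
  rw [val_two' (by omega), val_neg_two (by omega)]
  omega

lemma mem_chords_iff {n : ℕ} [NeZero n] (e : Sym2 (ZMod n)) :
    e ∈ chords n ↔ IsChord n e := by simp [chords]

lemma chord_mk {n : ℕ} [NeZero n] {i j : ZMod n} (h1 : j ≠ i - 1) (h2 : j ≠ i)
    (h3 : j ≠ i + 1) : s(i, j) ∈ chords n := by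
  rw [mem_chords_iff]
  intro i' j' he
  rcases Sym2.eq_iff.mp he with ⟨hi, hj⟩ | ⟨hi, hj⟩
  · subst hi; subst hj; exact ⟨h1, h2, h3⟩
  · subst hi; subst hj
    exact ⟨fun h => h3 (by rw [h]; ring), fun h => h2 h.symm, fun h => h1 (by rw [h]; ring)⟩

lemma chord_cond {n : ℕ} [NeZero n] {i j : ZMod n} (h : s(i, j) ∈ chords n) :
    j ≠ i - 1 ∧ j ≠ i ∧ j ≠ i + 1 := ((mem_chords_iff _).mp h) i j rfl




lemma neg_factor {A B : ℝ} (h : A * B < 0) (hA : 0 < A) : B < 0 := by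
  rcases mul_neg_iff.mp h with ⟨p, q⟩ | ⟨p, q⟩
  · exact q
  · exact (lt_asymm p hA).elim

lemma neg_factor' {A B : ℝ} (h : A * B < 0) (hB : 0 < B) : A < 0 := by
  rcases mul_neg_iff.mp h with ⟨p, q⟩ | ⟨p, q⟩
  · exact (lt_asymm q hB).elim
  · exact p

lemma pos_factor {A B : ℝ} (h : 0 < A * B) (hB : 0 < B) : 0 < A := by
  rcases mul_pos_iff.mp h with ⟨p, q⟩ | ⟨p, q⟩
  · exact p
  · exact (lt_asymm q hB).elim

/-- For `n ≥ 6` and injective `z : ZMod n → ℝ` with all length-2 chords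
positive and `u_{0,3}(z) < 0`, swapping the labels `1` and `3` strictly decreases the
number of negative chords. -/
theorem swap_decreases_neg_length_three (n : ℕ) [NeZero n] (hn : 6 ≤ n) (z : ZMod n → ℝ)
    (hz : Function.Injective z)
    (hpos : ∀ e ∈ chords n, chordLength n e = 2 → 0 < u z e)
    (hneg : u z s((0 : ZMod n), (3 : ZMod n)) < 0) :
    negCount n (fun k => z (Equiv.swap (1 : ZMod n) (3 : ZMod n) k)) < negCount n z := by
  classical
  set w : ZMod n → ℝ := fun k => z (Equiv.swap (1 : ZMod n) (3 : ZMod n) k) with hw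
  have NE : ∀ k m : ℕ, k < n → m < n → k ≠ m → (k : ZMod n) ≠ (m : ZMod n) :=
    fun k m hk hm h => cast_ne hk hm h
  have ne01 : (0 : ZMod n) ≠ 1 := by exact_mod_cast NE 0 1 (by omega) (by omega) (by omega)
  have ne02 : (0 : ZMod n) ≠ 2 := by exact_mod_cast NE 0 2 (by omega) (by omega) (by omega)
  have ne03 : (0 : ZMod n) ≠ 3 := by exact_mod_cast NE 0 3 (by omega) (by omega) (by omega)
  have ne04 : (0 : ZMod n) ≠ 4 := by exact_mod_cast NE 0 4 (by omega) (by omega) (by omega)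
  have ne05 : (0 : ZMod n) ≠ 5 := by exact_mod_cast NE 0 5 (by omega) (by omega) (by omega)
  have ne12 : (1 : ZMod n) ≠ 2 := by exact_mod_cast NE 1 2 (by omega) (by omega) (by omega)
  have ne13 : (1 : ZMod n) ≠ 3 := by exact_mod_cast NE 1 3 (by omega) (by omega) (by omega)
  have ne14 : (1 : ZMod n) ≠ 4 := by exact_mod_cast NE 1 4 (by omega) (by omega) (by omega)
  have ne15 : (1 : ZMod n) ≠ 5 := by exact_mod_cast NE 1 5 (by omega) (by omega) (by omega)
  have ne23 : (2 : ZMod n) ≠ 3 := by exact_mod_cast NE 2 3 (by omega) (by omega) (by omega)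
  have ne24 : (2 : ZMod n) ≠ 4 := by exact_mod_cast NE 2 4 (by omega) (by omega) (by omega)
  have ne25 : (2 : ZMod n) ≠ 5 := by exact_mod_cast NE 2 5 (by omega) (by omega) (by omega)
  have ne34 : (3 : ZMod n) ≠ 4 := by exact_mod_cast NE 3 4 (by omega) (by omega) (by omega)
  have ne35 : (3 : ZMod n) ≠ 5 := by exact_mod_cast NE 3 5 (by omega) (by omega) (by omega)
  have ne45 : (4 : ZMod n) ≠ 5 := by exact_mod_cast NE 4 5 (by omega) (by omega) (by omega)
  have hm1 : ((n - 1 : ℕ) : ZMod n) = -1 := by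
    have h' : ((n - 1 : ℕ) : ZMod n) = (n : ZMod n) - 1 := by
      push_cast [show 1 ≤ n by omega]; ring
    rw [h', ZMod.natCast_self, zero_sub]
  have nem0 : (-1 : ZMod n) ≠ 0 := by
    rw [← hm1]; exact_mod_cast NE (n - 1) 0 (by omega) (by omega) (by omega)
  have nem1 : (-1 : ZMod n) ≠ 1 := by
    rw [← hm1]; exact_mod_cast NE (n - 1) 1 (by omega) (by omega) (by omega)
  have nem2 : (-1 : ZMod n) ≠ 2 := by
    rw [← hm1]; exact_mod_cast NE (n - 1) 2 (by omega) (by omega) (by omega)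
  have nem3 : (-1 : ZMod n) ≠ 3 := by
    rw [← hm1]; exact_mod_cast NE (n - 1) 3 (by omega) (by omega) (by omega)
  have nem4 : (-1 : ZMod n) ≠ 4 := by
    rw [← hm1]; exact_mod_cast NE (n - 1) 4 (by omega) (by omega) (by omega)
  have ne10 : (1 : ZMod n) ≠ 0 := ne01.symm
  have ne20 : (2 : ZMod n) ≠ 0 := ne02.symm
  have ne30 : (3 : ZMod n) ≠ 0 := ne03.symm
  have hzne : ∀ i j : ZMod n, i ≠ j → z i ≠ z j := fun i j h hc => h (hz hc)
  have hwinj : Function.Injective w := by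
    simp only [hw]
    exact fun x y hxy => (Equiv.swap (1 : ZMod n) 3).injective (hz hxy)
  have hwne : ∀ i j : ZMod n, i ≠ j → w i ≠ w j := fun i j h hc => h (hwinj hc)
  have hwz : ∀ k : ZMod n, k ≠ 1 → k ≠ 3 → w k = z k := by
    intro k h1 h3
    simp only [hw]
    rw [Equiv.swap_apply_of_ne_of_ne h1 h3]
  have hw1 : w 1 = z 3 := by simp only [hw]; rw [Equiv.swap_apply_left]
  have hw3 : w 3 = z 1 := by simp only [hw]; rw [Equiv.swap_apply_right]
  have hw0 : w 0 = z 0 := hwz 0 ne01 ne03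
  have hw2 : w 2 = z 2 := hwz 2 (ne12.symm) ne23
  have hw4 : w 4 = z 4 := hwz 4 (ne14.symm) (ne34.symm)
  have hw5 : w 5 = z 5 := hwz 5 (ne15.symm) (ne35.symm)
  have ULT : ∀ i j : ZMod n, i ≠ j → i ≠ j + 1 → i + 1 ≠ j → i + 1 ≠ j + 1 →
      ((u z s(i, j) < 0 ↔ Q (z i) (z (i + 1)) (z j) (z (j + 1)) < 0) ∧
        (0 < u z s(i, j) ↔ 0 < Q (z i) (z (i + 1)) (z j) (z (j + 1))) ∧ u z s(i, j) ≠ 0) :=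
    fun i j a b c d => u_lt_iff z (hzne _ _ a) (hzne _ _ b) (hzne _ _ c) (hzne _ _ d)
  have UWT : ∀ i j : ZMod n, i ≠ j → i ≠ j + 1 → i + 1 ≠ j → i + 1 ≠ j + 1 →
      ((u w s(i, j) < 0 ↔ Q (w i) (w (i + 1)) (w j) (w (j + 1)) < 0) ∧
        (0 < u w s(i, j) ↔ 0 < Q (w i) (w (i + 1)) (w j) (w (j + 1))) ∧ u w s(i, j) ≠ 0) :=
    fun i j a b c d => u_lt_iff w (hwne _ _ a) (hwne _ _ b) (hwne _ _ c) (hwne _ _ d)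
  have c2chord : ∀ i : ZMod n, s(i, i + 2) ∈ chords n := by
    intro i
    apply chord_mk
    · exact fun h => ne30 (by linear_combination h)
    · exact fun h => ne20 (by linear_combination h)
    · exact fun h => ne10 (by linear_combination h)
  have QL2 : ∀ i : ZMod n, 0 < Q (z i) (z (i + 1)) (z (i + 2)) (z (i + 2 + 1)) := by
    intro i
    have hu := hpos _ (c2chord i) (chordLength_add_two hn i)
    have hd1 : i ≠ i + 2 := fun h => ne20 (by linear_combination -h)
    have hd2 : i ≠ i + 2 + 1 := fun h => ne30 (by linear_combination -h)
    have hd3 : i + 1 ≠ i + 2 := fun h => ne10 (by linear_combination -h)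
    have hd4 : i + 1 ≠ i + 2 + 1 := fun h => ne20 (by linear_combination -h)
    exact ((ULT i (i + 2) hd1 hd2 hd3 hd4).2.1).mp hu
  have HQ02 : 0 < Q (z 0) (z 1) (z 2) (z 3) := by have h := QL2 0; norm_num at h; exact h
  have HQ13 : 0 < Q (z 1) (z 2) (z 3) (z 4) := by have h := QL2 1; norm_num at h; exact h
  have HQ24 : 0 < Q (z 2) (z 3) (z 4) (z 5) := by have h := QL2 2; norm_num at h; exact h
  have HQm1 : 0 < Q (z (-1)) (z 0) (z 1) (z 2) := by
    have h := QL2 (-1)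
    rw [show (-1 : ZMod n) + 2 + 1 = 2 by ring, show (-1 : ZMod n) + 1 = 0 by ring,
      show (-1 : ZMod n) + 2 = 1 by ring] at h
    exact h
  have H03q : Q (z 0) (z 1) (z 3) (z 4) < 0 := by
    have h := (ULT 0 3 ne03 (by rw [show (3 : ZMod n) + 1 = 4 by norm_num]; exact ne04)
      (by rw [show (0 : ZMod n) + 1 = 1 by norm_num]; exact ne13)
      (by rw [show (0 : ZMod n) + 1 = 1 by norm_num, show (3 : ZMod n) + 1 = 4 by norm_num]
          exact ne14)).1
    norm_num at h
    exact h.mp hneg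
  obtain ⟨IN1, IN2, IN3⟩ := M0nGeo.inner HQ02 HQ13 H03q
  have UW02 : 0 < u w s((0 : ZMod n), 2) := by
    have h := (UWT 0 2 ne02 (by rw [show (2 : ZMod n) + 1 = 3 by norm_num]; exact ne03)
      (by rw [show (0 : ZMod n) + 1 = 1 by norm_num]; exact ne12)
      (by rw [show (0 : ZMod n) + 1 = 1 by norm_num, show (2 : ZMod n) + 1 = 3 by norm_num]
          exact ne13)).2.1
    norm_num at h
    rw [hw0, hw1, hw2, hw3] at h
    exact h.mpr IN1
  have UW13 : 0 < u w s((1 : ZMod n), 3) := by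
    have h := (UWT 1 3 ne13 (by rw [show (3 : ZMod n) + 1 = 4 by norm_num]; exact ne14)
      (by rw [show (1 : ZMod n) + 1 = 2 by norm_num]; exact ne23)
      (by rw [show (1 : ZMod n) + 1 = 2 by norm_num, show (3 : ZMod n) + 1 = 4 by norm_num]
          exact ne24)).2.1
    norm_num at h
    rw [hw1, hw2, hw3, hw4] at h
    exact h.mpr IN2
  have UW03 : 0 < u w s((0 : ZMod n), 3) := by
    have h := (UWT 0 3 ne03 (by rw [show (3 : ZMod n) + 1 = 4 by norm_num]; exact ne04)
      (by rw [show (0 : ZMod n) + 1 = 1 by norm_num]; exact ne13)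
      (by rw [show (0 : ZMod n) + 1 = 1 by norm_num, show (3 : ZMod n) + 1 = 4 by norm_num]
          exact ne14)).2.1
    norm_num at h
    rw [hw0, hw1, hw3, hw4] at h
    exact h.mpr IN3
  have hcase1 : ∀ jj : ZMod n, jj ≠ 0 → jj ≠ 1 → jj ≠ 2 → jj ≠ 3 →
      Sym2.map (Equiv.swap (1 : ZMod n) 2) s((1 : ZMod n), jj) ∈ chords n ∧
        (u w s((1 : ZMod n), jj) < 0 ↔
          u z (Sym2.map (Equiv.swap (1 : ZMod n) 2) s((1 : ZMod n), jj)) < 0) ∧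
        ¬((0 : ZMod n) ∈ Sym2.map (Equiv.swap (1 : ZMod n) 2) s((1 : ZMod n), jj) ∨
          (3 : ZMod n) ∈ Sym2.map (Equiv.swap (1 : ZMod n) 2) s((1 : ZMod n), jj)) := by
    intro jj h0 h1 h2 h3
    have hmap : Sym2.map (Equiv.swap (1 : ZMod n) 2) s((1 : ZMod n), jj) = s((2 : ZMod n), jj) := by
      rw [Sym2.map_pair_eq, Equiv.swap_apply_left, Equiv.swap_apply_of_ne_of_ne h1 h2]
    rw [hmap]
    refine ⟨?_, ?_, ?_⟩
    · apply chord_mk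
      · rw [show (2 : ZMod n) - 1 = 1 by norm_num]; exact h1
      · exact h2
      · rw [show (2 : ZMod n) + 1 = 3 by norm_num]; exact h3
    · have hiffw := (UWT 1 jj (fun h => h1 h.symm)
        (fun h => h0 (by linear_combination -h))
        (by rw [show (1 : ZMod n) + 1 = 2 by norm_num]; exact fun h => h2 h.symm)
        (by rw [show (1 : ZMod n) + 1 = 2 by norm_num]
            exact fun h => h1 (by linear_combination -h))).1
      rw [show (1 : ZMod n) + 1 = 2 by norm_num, hw1, hw2, hwz jj h1 h3,
        hwz (jj + 1) (fun h => h0 (by linear_combination h))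
          (fun h => h2 (by linear_combination h))] at hiffw
      have hiffz := (ULT 2 jj (fun h => h2 h.symm) (fun h => h1 (by linear_combination -h))
        (by rw [show (2 : ZMod n) + 1 = 3 by norm_num]; exact fun h => h3 h.symm)
        (by rw [show (2 : ZMod n) + 1 = 3 by norm_num]
            exact fun h => h2 (by linear_combination -h))).1
      rw [show (2 : ZMod n) + 1 = 3 by norm_num] at hiffz
      have hqq : Q (z 3) (z 2) (z jj) (z (jj + 1)) = Q (z 2) (z 3) (z jj) (z (jj + 1)) := by
        unfold Q; ring
      rw [hiffw, hqq, ← hiffz]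
    · rintro (hm | hm) <;> rw [Sym2.mem_iff] at hm <;> rcases hm with h | h
      · exact ne02 h
      · exact h0 h.symm
      · exact ne23 h.symm
      · exact h3 h.symm
  have hcase2 : ∀ jj : ZMod n, jj ≠ 0 → jj ≠ 1 → jj ≠ 2 → jj ≠ 3 →
      Sym2.map (Equiv.swap (1 : ZMod n) 2) s((2 : ZMod n), jj) ∈ chords n ∧
        (u w s((2 : ZMod n), jj) < 0 ↔
          u z (Sym2.map (Equiv.swap (1 : ZMod n) 2) s((2 : ZMod n), jj)) < 0) ∧
        ¬((0 : ZMod n) ∈ Sym2.map (Equiv.swap (1 : ZMod n) 2) s((2 : ZMod n), jj) ∨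
          (3 : ZMod n) ∈ Sym2.map (Equiv.swap (1 : ZMod n) 2) s((2 : ZMod n), jj)) := by
    intro jj h0 h1 h2 h3
    have hmap : Sym2.map (Equiv.swap (1 : ZMod n) 2) s((2 : ZMod n), jj) = s((1 : ZMod n), jj) := by
      rw [Sym2.map_pair_eq, Equiv.swap_apply_right, Equiv.swap_apply_of_ne_of_ne h1 h2]
    rw [hmap]
    refine ⟨?_, ?_, ?_⟩
    · apply chord_mk
      · rw [show (1 : ZMod n) - 1 = 0 by norm_num]; exact h0
      · exact h1
      · rw [show (1 : ZMod n) + 1 = 2 by norm_num]; exact h2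
    · have hiffw := (UWT 2 jj (fun h => h2 h.symm)
        (fun h => h1 (by linear_combination -h))
        (by rw [show (2 : ZMod n) + 1 = 3 by norm_num]; exact fun h => h3 h.symm)
        (by rw [show (2 : ZMod n) + 1 = 3 by norm_num]
            exact fun h => h2 (by linear_combination -h))).1
      rw [show (2 : ZMod n) + 1 = 3 by norm_num, hw2, hw3, hwz jj h1 h3,
        hwz (jj + 1) (fun h => h0 (by linear_combination h))
          (fun h => h2 (by linear_combination h))] at hiffw
      have hiffz := (ULT 1 jj (fun h => h1 h.symm) (fun h => h0 (by linear_combination -h))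
        (by rw [show (1 : ZMod n) + 1 = 2 by norm_num]; exact fun h => h2 h.symm)
        (by rw [show (1 : ZMod n) + 1 = 2 by norm_num]
            exact fun h => h1 (by linear_combination -h))).1
      rw [show (1 : ZMod n) + 1 = 2 by norm_num] at hiffz
      have hqq : Q (z 2) (z 1) (z jj) (z (jj + 1)) = Q (z 1) (z 2) (z jj) (z (jj + 1)) := by
        unfold Q; ring
      rw [hiffw, hqq, ← hiffz]
    · rintro (hm | hm) <;> rw [Sym2.mem_iff] at hm <;> rcases hm with h | h
      · exact ne01 h
      · exact h0 h.symm
      · exact ne13 h.symm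
      · exact h3 h.symm
  have STR2 : ∀ e, e ∈ chords n → ¬((0 : ZMod n) ∈ e ∨ (3 : ZMod n) ∈ e) →
      Sym2.map (Equiv.swap (1 : ZMod n) 2) e ∈ chords n ∧
        (u w e < 0 ↔ u z (Sym2.map (Equiv.swap (1 : ZMod n) 2) e) < 0) ∧
        ¬((0 : ZMod n) ∈ Sym2.map (Equiv.swap (1 : ZMod n) 2) e ∨
          (3 : ZMod n) ∈ Sym2.map (Equiv.swap (1 : ZMod n) 2) e) := by
    intro e he hmem
    induction e using Sym2.ind with
    | _ i j =>
      push_neg at hmem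
      obtain ⟨hm0, hm3⟩ := hmem
      rw [Sym2.mem_iff] at hm0 hm3
      push_neg at hm0 hm3
      by_cases hi1 : i = 1
      · subst hi1
        have hc := chord_cond he
        refine hcase1 j ?_ hc.2.1 ?_ (fun h => hm3.2 h.symm)
        · rw [show (1 : ZMod n) - 1 = 0 by norm_num] at hc; exact hc.1
        · rw [show (1 : ZMod n) + 1 = 2 by norm_num] at hc; exact hc.2.2
      · by_cases hj1 : j = 1
        · subst hj1
          rw [(Sym2.eq_swap : s(i, (1 : ZMod n)) = s(1, i))] at he ⊢
          have hc := chord_cond he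
          refine hcase1 i ?_ hc.2.1 ?_ (fun h => hm3.1 h.symm)
          · rw [show (1 : ZMod n) - 1 = 0 by norm_num] at hc; exact hc.1
          · rw [show (1 : ZMod n) + 1 = 2 by norm_num] at hc; exact hc.2.2
        · by_cases hi2 : i = 2
          · subst hi2
            have hc := chord_cond he
            refine hcase2 j (fun h => hm0.2 h.symm) ?_ hc.2.1 (fun h => hm3.2 h.symm)
            · rw [show (2 : ZMod n) - 1 = 1 by norm_num] at hc; exact hc.1
          · by_cases hj2 : j = 2
            · subst hj2
              rw [(Sym2.eq_swap : s(i, (2 : ZMod n)) = s(2, i))] at he ⊢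
              have hc := chord_cond he
              refine hcase2 i (fun h => hm0.1 h.symm) ?_ hc.2.1 (fun h => hm3.1 h.symm)
              · rw [show (2 : ZMod n) - 1 = 1 by norm_num] at hc; exact hc.1
            · have hmap : Sym2.map (Equiv.swap (1 : ZMod n) 2) s(i, j) = s(i, j) := by
                rw [Sym2.map_pair_eq, Equiv.swap_apply_of_ne_of_ne hi1 hi2,
                  Equiv.swap_apply_of_ne_of_ne hj1 hj2]
              rw [hmap]
              refine ⟨he, ?_, ?_⟩
              · have huw : u w s(i, j) = u z s(i, j) := by
                  rw [u_eval, u_eval, hwz i hi1 (fun h => hm3.1 h.symm),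
                    hwz (i + 1) (fun h => hm0.1 (by linear_combination -h))
                      (fun h => hi2 (by linear_combination h)),
                    hwz j hj1 (fun h => hm3.2 h.symm),
                    hwz (j + 1) (fun h => hm0.2 (by linear_combination -h))
                      (fun h => hj2 (by linear_combination h))]
                rw [huw]
              · rintro (hm | hm) <;> rw [Sym2.mem_iff] at hm <;> rcases hm with h | h
                · exact hm0.1 h
                · exact hm0.2 h
                · exact hm3.1 h
                · exact hm3.2 h
  have hcore0 : ∀ jj : ZMod n, s((0 : ZMod n), jj) ∈ chords n → u w s((0 : ZMod n), jj) < 0 →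
      ¬(u z s((0 : ZMod n), jj) < 0) →
      Sym2.map (Equiv.swap (0 : ZMod n) 3) s((0 : ZMod n), jj) ∈ chords n ∧
        u z (Sym2.map (Equiv.swap (0 : ZMod n) 3) s((0 : ZMod n), jj)) < 0 ∧
        0 < u w (Sym2.map (Equiv.swap (0 : ZMod n) 3) s((0 : ZMod n), jj)) ∧
        Sym2.map (Equiv.swap (0 : ZMod n) 3) s((0 : ZMod n), jj) ≠ s((0 : ZMod n), 3) := by
    intro jj hch huw hnz
    have hc := chord_cond hch
    have hjm1 : jj ≠ -1 := by have := hc.1; rwa [zero_sub] at this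
    have hj0 : jj ≠ 0 := hc.2.1
    have hj1 : jj ≠ 1 := by have := hc.2.2; rwa [zero_add] at this
    by_cases hj3 : jj = 3
    · exfalso; rw [hj3] at huw; linarith [UW03]
    by_cases hj2 : jj = 2
    · exfalso; rw [hj2] at huw; linarith [UW02]
    by_cases hj4 : jj = 4
    · exfalso
      rw [hj4] at huw hnz
      have hQad : Q (z 0) (z 3) (z 4) (z 5) < 0 := by
        have h := (UWT 0 4 ne04 (by rw [show (4 : ZMod n) + 1 = 5 by norm_num]; exact ne05)
          (by rw [show (0 : ZMod n) + 1 = 1 by norm_num]; exact ne14)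
          (by rw [show (0 : ZMod n) + 1 = 1 by norm_num, show (4 : ZMod n) + 1 = 5 by norm_num]
              exact ne15)).1
        norm_num at h
        rw [hw0, hw1, hw4, hw5] at h
        exact h.mp huw
      have hQab : 0 < Q (z 0) (z 1) (z 4) (z 5) := by
        have h := ULT 0 4 ne04 (by rw [show (4 : ZMod n) + 1 = 5 by norm_num]; exact ne05)
          (by rw [show (0 : ZMod n) + 1 = 1 by norm_num]; exact ne14)
          (by rw [show (0 : ZMod n) + 1 = 1 by norm_num, show (4 : ZMod n) + 1 = 5 by norm_num]
              exact ne15)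
        norm_num at h
        exact h.2.1.mp (lt_of_le_of_ne (not_lt.mp hnz) (Ne.symm h.2.2))
      have hsq1 : 0 < ((z 4 - z 1) * (z 5 - z 1)) ^ 2 := by
        apply pow_two_pos_of_ne_zero
        exact mul_ne_zero (sub_ne_zero.mpr (hzne _ _ ne14.symm))
          (sub_ne_zero.mpr (hzne _ _ ne15.symm))
      have hid1 : Q (z 0) (z 1) (z 4) (z 5) * Q (z 1) (z 3) (z 4) (z 5)
          = Q (z 0) (z 3) (z 4) (z 5) * ((z 4 - z 1) * (z 5 - z 1)) ^ 2 := by unfold Q; ring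
      have hQbd : Q (z 1) (z 3) (z 4) (z 5) < 0 := by
        have h1 : Q (z 0) (z 1) (z 4) (z 5) * Q (z 1) (z 3) (z 4) (z 5) < 0 := by
          rw [hid1]; exact mul_neg_of_neg_of_pos hQad hsq1
        exact neg_factor h1 hQab
      have hsq2 : 0 < ((z 4 - z 2) * (z 5 - z 2)) ^ 2 := by
        apply pow_two_pos_of_ne_zero
        exact mul_ne_zero (sub_ne_zero.mpr (hzne _ _ ne24.symm))
          (sub_ne_zero.mpr (hzne _ _ ne25.symm))
      have hid2 : Q (z 1) (z 2) (z 4) (z 5) * Q (z 2) (z 3) (z 4) (z 5)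
          = Q (z 1) (z 3) (z 4) (z 5) * ((z 4 - z 2) * (z 5 - z 2)) ^ 2 := by unfold Q; ring
      have hQbc : Q (z 1) (z 2) (z 4) (z 5) < 0 := by
        have h1 : Q (z 1) (z 2) (z 4) (z 5) * Q (z 2) (z 3) (z 4) (z 5) < 0 := by
          rw [hid2]; exact mul_neg_of_neg_of_pos hQbd hsq2
        exact neg_factor' h1 HQ24
      exact M0nGeo.L4geom H03q hQab hQbc HQ24
    -- generic far jj
    have e0 : (0 : ZMod n) ≠ jj := fun h => hj0 h.symm
    have e1 : (0 : ZMod n) ≠ jj + 1 := fun h => hjm1 (by linear_combination -h)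
    have e2 : (1 : ZMod n) ≠ jj := fun h => hj1 h.symm
    have e3 : (1 : ZMod n) ≠ jj + 1 := fun h => hj0 (by linear_combination -h)
    have e4 : (3 : ZMod n) ≠ jj := fun h => hj3 h.symm
    have e5 : (3 : ZMod n) ≠ jj + 1 := fun h => hj2 (by linear_combination -h)
    have e6 : (4 : ZMod n) ≠ jj := fun h => hj4 h.symm
    have e7 : (4 : ZMod n) ≠ jj + 1 := fun h => hj3 (by linear_combination -h)
    have hQad : Q (z 0) (z 3) (z jj) (z (jj + 1)) < 0 := by
      have h := (UWT 0 jj e0 e1 (by rw [show (0 : ZMod n) + 1 = 1 by norm_num]; exact e2)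
        (by rw [show (0 : ZMod n) + 1 = 1 by norm_num]; exact e3)).1
      rw [show (0 : ZMod n) + 1 = 1 by norm_num, hw0, hw1, hwz jj hj1 hj3,
        hwz (jj + 1) (fun h => hj0 (by linear_combination h))
          (fun h => hj2 (by linear_combination h))] at h
      exact h.mp huw
    have hQab : 0 < Q (z 0) (z 1) (z jj) (z (jj + 1)) := by
      have h := ULT 0 jj e0 e1 (by rw [show (0 : ZMod n) + 1 = 1 by norm_num]; exact e2)
        (by rw [show (0 : ZMod n) + 1 = 1 by norm_num]; exact e3)
      rw [show (0 : ZMod n) + 1 = 1 by norm_num] at h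
      exact h.2.1.mp (lt_of_le_of_ne (not_lt.mp hnz) (Ne.symm h.2.2))
    have hsq1 : 0 < ((z jj - z 1) * (z (jj + 1) - z 1)) ^ 2 := by
      apply pow_two_pos_of_ne_zero
      exact mul_ne_zero (sub_ne_zero.mpr (hzne _ _ (fun h => e2 h.symm)))
        (sub_ne_zero.mpr (hzne _ _ (fun h => e3 h.symm)))
    have hid1 : Q (z 0) (z 1) (z jj) (z (jj + 1)) * Q (z 1) (z 3) (z jj) (z (jj + 1))
        = Q (z 0) (z 3) (z jj) (z (jj + 1)) * ((z jj - z 1) * (z (jj + 1) - z 1)) ^ 2 := by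
      unfold Q; ring
    have hQbd : Q (z 1) (z 3) (z jj) (z (jj + 1)) < 0 := by
      have h1 : Q (z 0) (z 1) (z jj) (z (jj + 1)) * Q (z 1) (z 3) (z jj) (z (jj + 1)) < 0 := by
        rw [hid1]; exact mul_neg_of_neg_of_pos hQad hsq1
      exact neg_factor h1 hQab
    have hQdene : Q (z 3) (z 4) (z jj) (z (jj + 1)) ≠ 0 := by
      unfold Q
      exact mul_ne_zero (mul_ne_zero (sub_ne_zero.mpr (hzne _ _ (fun h => e4 h.symm)))
        (sub_ne_zero.mpr (hzne _ _ (fun h => e6 h.symm))))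
        (mul_ne_zero (sub_ne_zero.mpr (hzne _ _ (fun h => e5 h.symm)))
          (sub_ne_zero.mpr (hzne _ _ (fun h => e7 h.symm))))
    have hQde : Q (z 3) (z 4) (z jj) (z (jj + 1)) < 0 := by
      rcases hQdene.lt_or_gt with h | h
      · exact h
      · exfalso
        have hk := M0nGeo.key H03q hQab h
        linarith [hQbd]
    have hmap : Sym2.map (Equiv.swap (0 : ZMod n) 3) s((0 : ZMod n), jj) = s((3 : ZMod n), jj) := by
      rw [Sym2.map_pair_eq, Equiv.swap_apply_left, Equiv.swap_apply_of_ne_of_ne hj0 hj3]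
    rw [hmap]
    refine ⟨?_, ?_, ?_, ?_⟩
    · apply chord_mk
      · rw [show (3 : ZMod n) - 1 = 2 by norm_num]; exact hj2
      · exact hj3
      · rw [show (3 : ZMod n) + 1 = 4 by norm_num]; exact hj4
    · have h := (ULT 3 jj e4 e5 (by rw [show (3 : ZMod n) + 1 = 4 by norm_num]; exact e6)
        (by rw [show (3 : ZMod n) + 1 = 4 by norm_num]; exact e7)).1
      rw [show (3 : ZMod n) + 1 = 4 by norm_num] at h
      exact h.mpr hQde
    · have h := (UWT 3 jj e4 e5 (by rw [show (3 : ZMod n) + 1 = 4 by norm_num]; exact e6)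
        (by rw [show (3 : ZMod n) + 1 = 4 by norm_num]; exact e7)).2.1
      rw [show (3 : ZMod n) + 1 = 4 by norm_num, hw3, hw4, hwz jj hj1 hj3,
        hwz (jj + 1) (fun h => hj0 (by linear_combination h))
          (fun h => hj2 (by linear_combination h))] at h
      apply h.mpr
      have hsq3 : 0 < ((z jj - z 3) * (z (jj + 1) - z 3)) ^ 2 := by
        apply pow_two_pos_of_ne_zero
        exact mul_ne_zero (sub_ne_zero.mpr (hzne _ _ (fun h => e4 h.symm)))
          (sub_ne_zero.mpr (hzne _ _ (fun h => e5 h.symm)))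
      have hid3 : Q (z 1) (z 3) (z jj) (z (jj + 1)) * Q (z 3) (z 4) (z jj) (z (jj + 1))
          = Q (z 1) (z 4) (z jj) (z (jj + 1)) * ((z jj - z 3) * (z (jj + 1) - z 3)) ^ 2 := by
        unfold Q; ring
      have h1 : 0 < Q (z 1) (z 4) (z jj) (z (jj + 1)) * ((z jj - z 3) * (z (jj + 1) - z 3)) ^ 2 := by
        rw [← hid3]; exact mul_pos_of_neg_of_neg hQbd hQde
      exact pos_factor h1 hsq3
    · intro hcon
      rcases Sym2.eq_iff.mp hcon with ⟨h1, h2⟩ | ⟨h1, h2⟩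
      · exact ne30 h1
      · exact hj0 h2
  have hcore3 : ∀ jj : ZMod n, s((3 : ZMod n), jj) ∈ chords n → u w s((3 : ZMod n), jj) < 0 →
      ¬(u z s((3 : ZMod n), jj) < 0) →
      Sym2.map (Equiv.swap (0 : ZMod n) 3) s((3 : ZMod n), jj) ∈ chords n ∧
        u z (Sym2.map (Equiv.swap (0 : ZMod n) 3) s((3 : ZMod n), jj)) < 0 ∧
        0 < u w (Sym2.map (Equiv.swap (0 : ZMod n) 3) s((3 : ZMod n), jj)) ∧
        Sym2.map (Equiv.swap (0 : ZMod n) 3) s((3 : ZMod n), jj) ≠ s((0 : ZMod n), 3) := by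
    intro jj hch huw hnz
    have hc := chord_cond hch
    have hj2 : jj ≠ 2 := by have := hc.1; rwa [show (3 : ZMod n) - 1 = 2 by norm_num] at this
    have hj3 : jj ≠ 3 := hc.2.1
    have hj4 : jj ≠ 4 := by have := hc.2.2; rwa [show (3 : ZMod n) + 1 = 4 by norm_num] at this
    by_cases hj0 : jj = 0
    · exfalso
      rw [hj0, (Sym2.eq_swap : s((3 : ZMod n), 0) = s(0, 3))] at huw
      linarith [UW03]
    by_cases hj1 : jj = 1
    · exfalso
      rw [hj1, (Sym2.eq_swap : s((3 : ZMod n), 1) = s(1, 3))] at huw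
      linarith [UW13]
    by_cases hjm1 : jj = -1
    · exfalso
      rw [hjm1] at huw hnz
      have hQbe : Q (z 1) (z 4) (z (-1)) (z 0) < 0 := by
        have h := (UWT 3 (-1) (fun h => nem3 h.symm)
          (by rw [show (-1 : ZMod n) + 1 = 0 by ring]; exact ne30)
          (by rw [show (3 : ZMod n) + 1 = 4 by norm_num]; exact fun h => nem4 h.symm)
          (by rw [show (3 : ZMod n) + 1 = 4 by norm_num, show (-1 : ZMod n) + 1 = 0 by ring]
              exact ne04.symm)).1
        rw [show (3 : ZMod n) + 1 = 4 by norm_num, show (-1 : ZMod n) + 1 = 0 by ring,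
          hw3, hw4, hwz (-1) nem1 nem3, hw0] at h
        exact h.mp huw
      have hQde' : 0 < Q (z 3) (z 4) (z (-1)) (z 0) := by
        have h := ULT 3 (-1) (fun h => nem3 h.symm)
          (by rw [show (-1 : ZMod n) + 1 = 0 by ring]; exact ne30)
          (by rw [show (3 : ZMod n) + 1 = 4 by norm_num]; exact fun h => nem4 h.symm)
          (by rw [show (3 : ZMod n) + 1 = 4 by norm_num, show (-1 : ZMod n) + 1 = 0 by ring]
              exact ne04.symm)
        rw [show (3 : ZMod n) + 1 = 4 by norm_num, show (-1 : ZMod n) + 1 = 0 by ring] at h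
        exact h.2.1.mp (lt_of_le_of_ne (not_lt.mp hnz) (Ne.symm h.2.2))
      have hsqd : 0 < ((z (-1) - z 3) * (z 0 - z 3)) ^ 2 := by
        apply pow_two_pos_of_ne_zero
        exact mul_ne_zero (sub_ne_zero.mpr (hzne _ _ nem3)) (sub_ne_zero.mpr (hzne _ _ ne03))
      have hidd : Q (z 1) (z 3) (z (-1)) (z 0) * Q (z 3) (z 4) (z (-1)) (z 0)
          = Q (z 1) (z 4) (z (-1)) (z 0) * ((z (-1) - z 3) * (z 0 - z 3)) ^ 2 := by unfold Q; ring
      have hQbd' : Q (z 1) (z 3) (z (-1)) (z 0) < 0 := by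
        have h1 : Q (z 1) (z 3) (z (-1)) (z 0) * Q (z 3) (z 4) (z (-1)) (z 0) < 0 := by
          rw [hidd]; exact mul_neg_of_neg_of_pos hQbe hsqd
        exact neg_factor' h1 hQde'
      have hbcpos : 0 < Q (z 1) (z 2) (z (-1)) (z 0) := by
        have hqq : Q (z 1) (z 2) (z (-1)) (z 0) = Q (z (-1)) (z 0) (z 1) (z 2) := by
          unfold Q; ring
        rw [hqq]; exact HQm1
      have hsqc : 0 < ((z (-1) - z 2) * (z 0 - z 2)) ^ 2 := by
        apply pow_two_pos_of_ne_zero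
        exact mul_ne_zero (sub_ne_zero.mpr (hzne _ _ nem2)) (sub_ne_zero.mpr (hzne _ _ ne02))
      have hidc : Q (z 1) (z 2) (z (-1)) (z 0) * Q (z 2) (z 3) (z (-1)) (z 0)
          = Q (z 1) (z 3) (z (-1)) (z 0) * ((z (-1) - z 2) * (z 0 - z 2)) ^ 2 := by unfold Q; ring
      have hQcd' : Q (z 2) (z 3) (z (-1)) (z 0) < 0 := by
        have h1 : Q (z 1) (z 2) (z (-1)) (z 0) * Q (z 2) (z 3) (z (-1)) (z 0) < 0 := by
          rw [hidc]; exact mul_neg_of_neg_of_pos hQbd' hsqc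
        exact neg_factor h1 hbcpos
      have hL5 := M0nGeo.L5geom (hzne 4 (-1) (fun h => nem4 h.symm)) (hzne 4 0 ne04.symm)
        H03q hbcpos hQcd'
      linarith [hL5, hQde']
    -- generic far jj
    have e0 : (0 : ZMod n) ≠ jj := fun h => hj0 h.symm
    have e1 : (0 : ZMod n) ≠ jj + 1 := fun h => hjm1 (by linear_combination -h)
    have e2 : (1 : ZMod n) ≠ jj := fun h => hj1 h.symm
    have e3 : (1 : ZMod n) ≠ jj + 1 := fun h => hj0 (by linear_combination -h)
    have e4 : (3 : ZMod n) ≠ jj := fun h => hj3 h.symm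
    have e5 : (3 : ZMod n) ≠ jj + 1 := fun h => hj2 (by linear_combination -h)
    have e6 : (4 : ZMod n) ≠ jj := fun h => hj4 h.symm
    have e7 : (4 : ZMod n) ≠ jj + 1 := fun h => hj3 (by linear_combination -h)
    have hQbe : Q (z 1) (z 4) (z jj) (z (jj + 1)) < 0 := by
      have h := (UWT 3 jj e4 e5 (by rw [show (3 : ZMod n) + 1 = 4 by norm_num]; exact e6)
        (by rw [show (3 : ZMod n) + 1 = 4 by norm_num]; exact e7)).1
      rw [show (3 : ZMod n) + 1 = 4 by norm_num, hw3, hw4, hwz jj hj1 hj3,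
        hwz (jj + 1) (fun h => hj0 (by linear_combination h))
          (fun h => hj2 (by linear_combination h))] at h
      exact h.mp huw
    have hQde : 0 < Q (z 3) (z 4) (z jj) (z (jj + 1)) := by
      have h := ULT 3 jj e4 e5 (by rw [show (3 : ZMod n) + 1 = 4 by norm_num]; exact e6)
        (by rw [show (3 : ZMod n) + 1 = 4 by norm_num]; exact e7)
      rw [show (3 : ZMod n) + 1 = 4 by norm_num] at h
      exact h.2.1.mp (lt_of_le_of_ne (not_lt.mp hnz) (Ne.symm h.2.2))
    have hsq3 : 0 < ((z jj - z 3) * (z (jj + 1) - z 3)) ^ 2 := by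
      apply pow_two_pos_of_ne_zero
      exact mul_ne_zero (sub_ne_zero.mpr (hzne _ _ (fun h => e4 h.symm)))
        (sub_ne_zero.mpr (hzne _ _ (fun h => e5 h.symm)))
    have hid3 : Q (z 1) (z 3) (z jj) (z (jj + 1)) * Q (z 3) (z 4) (z jj) (z (jj + 1))
        = Q (z 1) (z 4) (z jj) (z (jj + 1)) * ((z jj - z 3) * (z (jj + 1) - z 3)) ^ 2 := by
      unfold Q; ring
    have hQbd : Q (z 1) (z 3) (z jj) (z (jj + 1)) < 0 := by
      have h1 : Q (z 1) (z 3) (z jj) (z (jj + 1)) * Q (z 3) (z 4) (z jj) (z (jj + 1)) < 0 := by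
        rw [hid3]; exact mul_neg_of_neg_of_pos hQbe hsq3
      exact neg_factor' h1 hQde
    have hQabne : Q (z 0) (z 1) (z jj) (z (jj + 1)) ≠ 0 := by
      unfold Q
      exact mul_ne_zero (mul_ne_zero (sub_ne_zero.mpr (hzne _ _ (fun h => e0 h.symm)))
        (sub_ne_zero.mpr (hzne _ _ (fun h => e2 h.symm))))
        (mul_ne_zero (sub_ne_zero.mpr (hzne _ _ (fun h => e1 h.symm)))
          (sub_ne_zero.mpr (hzne _ _ (fun h => e3 h.symm))))
    have hQab : Q (z 0) (z 1) (z jj) (z (jj + 1)) < 0 := by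
      rcases hQabne.lt_or_gt with h | h
      · exact h
      · exfalso
        have hk := M0nGeo.key H03q h hQde
        linarith [hQbd]
    have hmap : Sym2.map (Equiv.swap (0 : ZMod n) 3) s((3 : ZMod n), jj) = s((0 : ZMod n), jj) := by
      rw [Sym2.map_pair_eq, Equiv.swap_apply_right, Equiv.swap_apply_of_ne_of_ne hj0 hj3]
    rw [hmap]
    refine ⟨?_, ?_, ?_, ?_⟩
    · apply chord_mk
      · rw [zero_sub]; exact hjm1
      · exact hj0
      · rw [zero_add]; exact hj1
    · have h := (ULT 0 jj e0 e1 (by rw [show (0 : ZMod n) + 1 = 1 by norm_num]; exact e2)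
        (by rw [show (0 : ZMod n) + 1 = 1 by norm_num]; exact e3)).1
      rw [show (0 : ZMod n) + 1 = 1 by norm_num] at h
      exact h.mpr hQab
    · have h := (UWT 0 jj e0 e1 (by rw [show (0 : ZMod n) + 1 = 1 by norm_num]; exact e2)
        (by rw [show (0 : ZMod n) + 1 = 1 by norm_num]; exact e3)).2.1
      rw [show (0 : ZMod n) + 1 = 1 by norm_num, hw0, hw1, hwz jj hj1 hj3,
        hwz (jj + 1) (fun h => hj0 (by linear_combination h))
          (fun h => hj2 (by linear_combination h))] at h
      apply h.mpr
      have hsq1 : 0 < ((z jj - z 1) * (z (jj + 1) - z 1)) ^ 2 := by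
        apply pow_two_pos_of_ne_zero
        exact mul_ne_zero (sub_ne_zero.mpr (hzne _ _ (fun h => e2 h.symm)))
          (sub_ne_zero.mpr (hzne _ _ (fun h => e3 h.symm)))
      have hid1 : Q (z 0) (z 1) (z jj) (z (jj + 1)) * Q (z 1) (z 3) (z jj) (z (jj + 1))
          = Q (z 0) (z 3) (z jj) (z (jj + 1)) * ((z jj - z 1) * (z (jj + 1) - z 1)) ^ 2 := by
        unfold Q; ring
      have h1 : 0 < Q (z 0) (z 3) (z jj) (z (jj + 1)) * ((z jj - z 1) * (z (jj + 1) - z 1)) ^ 2 := by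
        rw [← hid1]; exact mul_pos_of_neg_of_neg hQab hQbd
      exact pos_factor h1 hsq1
    · intro hcon
      rcases Sym2.eq_iff.mp hcon with ⟨h1, h2⟩ | ⟨h1, h2⟩
      · exact hj3 h2
      · exact ne03 h1
  have STR : ∀ e, e ∈ chords n → u w e < 0 → ((0 : ZMod n) ∈ e ∨ (3 : ZMod n) ∈ e) →
      ¬(u z e < 0) →
      Sym2.map (Equiv.swap (0 : ZMod n) 3) e ∈ chords n ∧
        u z (Sym2.map (Equiv.swap (0 : ZMod n) 3) e) < 0 ∧
        0 < u w (Sym2.map (Equiv.swap (0 : ZMod n) 3) e) ∧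
        Sym2.map (Equiv.swap (0 : ZMod n) 3) e ≠ s((0 : ZMod n), 3) := by
    intro e he huw hmem hnz
    induction e using Sym2.ind with
    | _ i j =>
      rw [Sym2.mem_iff, Sym2.mem_iff] at hmem
      rcases hmem with (h | h) | (h | h)
      · subst h; exact hcore0 j he huw hnz
      · rw [(Sym2.eq_swap : s(i, j) = s(j, i))] at he huw hnz ⊢
        subst h; exact hcore0 i he huw hnz
      · subst h; exact hcore3 j he huw hnz
      · rw [(Sym2.eq_swap : s(i, j) = s(j, i))] at he huw hnz ⊢
        subst h; exact hcore3 i he huw hnz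
  set Φ : Sym2 (ZMod n) → Sym2 (ZMod n) := fun e =>
    if (0 : ZMod n) ∈ e ∨ (3 : ZMod n) ∈ e then
      (if u z e < 0 then e else Sym2.map (Equiv.swap (0 : ZMod n) 3) e)
    else Sym2.map (Equiv.swap (1 : ZMod n) 2) e with hΦ
  have hinvol : ∀ (p q : ZMod n) (e : Sym2 (ZMod n)),
      Sym2.map (Equiv.swap p q) (Sym2.map (Equiv.swap p q) e) = e := by
    intro p q e
    rw [Sym2.map_map]
    have hfun : (⇑(Equiv.swap p q) ∘ ⇑(Equiv.swap p q)) = id := by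
      funext x; simp [Equiv.swap_apply_self]
    rw [hfun, Sym2.map_id, id_eq]
  have hmark03 : ∀ e : Sym2 (ZMod n), ((0 : ZMod n) ∈ e ∨ (3 : ZMod n) ∈ e) →
      ((0 : ZMod n) ∈ Sym2.map (Equiv.swap (0 : ZMod n) 3) e ∨
        (3 : ZMod n) ∈ Sym2.map (Equiv.swap (0 : ZMod n) 3) e) := by
    intro e hm
    rcases hm with h | h
    · exact Or.inr (Sym2.mem_map.mpr ⟨0, h, Equiv.swap_apply_left _ _⟩)
    · exact Or.inl (Sym2.mem_map.mpr ⟨3, h, Equiv.swap_apply_right _ _⟩)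
  have hS03chord : s((0 : ZMod n), 3) ∈ chords n := by
    apply chord_mk
    · rw [zero_sub]; exact fun h => nem3 h.symm
    · exact ne03.symm
    · rw [zero_add]; exact ne13.symm
  have hmaps : ∀ e ∈ {e : Sym2 (ZMod n) | e ∈ chords n ∧ u w e < 0},
      Φ e ∈ {e : Sym2 (ZMod n) | e ∈ chords n ∧ u z e < 0} \ {s((0 : ZMod n), 3)} := by
    intro e he
    obtain ⟨hec, heneg⟩ := he
    by_cases hm : (0 : ZMod n) ∈ e ∨ (3 : ZMod n) ∈ e
    · by_cases hnz : u z e < 0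
      · have hΦe : Φ e = e := by simp only [hΦ]; rw [if_pos hm, if_pos hnz]
        rw [hΦe]
        refine ⟨⟨hec, hnz⟩, ?_⟩
        simp only [Set.mem_singleton_iff]
        intro hcon
        rw [hcon] at heneg
        linarith [UW03]
      · have hΦe : Φ e = Sym2.map (Equiv.swap (0 : ZMod n) 3) e := by
          simp only [hΦ]; rw [if_pos hm, if_neg hnz]
        obtain ⟨hc1, hc2, _, hc4⟩ := STR e hec heneg hm hnz
        rw [hΦe]
        exact ⟨⟨hc1, hc2⟩, by simpa using hc4⟩
    · have hΦe : Φ e = Sym2.map (Equiv.swap (1 : ZMod n) 2) e := by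
        simp only [hΦ]; rw [if_neg hm]
      obtain ⟨hc1, hc2, hc3⟩ := STR2 e hec hm
      rw [hΦe]
      refine ⟨⟨hc1, hc2.mp heneg⟩, ?_⟩
      simp only [Set.mem_singleton_iff]
      intro hcon
      apply hc3
      rw [hcon]
      exact Or.inl (Sym2.mem_iff.mpr (Or.inl rfl))
  have hinj : Set.InjOn Φ {e : Sym2 (ZMod n) | e ∈ chords n ∧ u w e < 0} := by
    intro e1 h1 e2 h2 heq
    obtain ⟨h1c, h1n⟩ := h1
    obtain ⟨h2c, h2n⟩ := h2
    by_cases m1 : (0 : ZMod n) ∈ e1 ∨ (3 : ZMod n) ∈ e1 <;>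
      by_cases m2 : (0 : ZMod n) ∈ e2 ∨ (3 : ZMod n) ∈ e2
    · by_cases n1 : u z e1 < 0 <;> by_cases n2 : u z e2 < 0
      · simp only [hΦ] at heq; rw [if_pos m1, if_pos m2, if_pos n1, if_pos n2] at heq
        exact heq
      · simp only [hΦ] at heq; rw [if_pos m1, if_pos m2, if_pos n1, if_neg n2] at heq
        obtain ⟨_, _, hpos', _⟩ := STR e2 h2c h2n m2 n2
        rw [← heq] at hpos'
        linarith
      · simp only [hΦ] at heq; rw [if_pos m1, if_pos m2, if_neg n1, if_pos n2] at heq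
        obtain ⟨_, _, hpos', _⟩ := STR e1 h1c h1n m1 n1
        rw [heq] at hpos'
        linarith
      · simp only [hΦ] at heq; rw [if_pos m1, if_pos m2, if_neg n1, if_neg n2] at heq
        have h' := congrArg (Sym2.map (Equiv.swap (0 : ZMod n) 3)) heq
        rwa [hinvol, hinvol] at h'
    · exfalso
      obtain ⟨_, _, hc3⟩ := STR2 e2 h2c m2
      apply hc3
      simp only [hΦ] at heq; rw [if_pos m1, if_neg m2] at heq
      rw [← heq]
      by_cases n1 : u z e1 < 0
      · rw [if_pos n1]; exact m1
      · rw [if_neg n1]; exact hmark03 e1 m1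
    · exfalso
      obtain ⟨_, _, hc3⟩ := STR2 e1 h1c m1
      apply hc3
      simp only [hΦ] at heq; rw [if_neg m1, if_pos m2] at heq
      rw [heq]
      by_cases n2 : u z e2 < 0
      · rw [if_pos n2]; exact m2
      · rw [if_neg n2]; exact hmark03 e2 m2
    · simp only [hΦ] at heq; rw [if_neg m1, if_neg m2] at heq
      have h' := congrArg (Sym2.map (Equiv.swap (1 : ZMod n) 2)) heq
      rwa [hinvol, hinvol] at h'
  have hS03B : s((0 : ZMod n), 3) ∈ {e : Sym2 (ZMod n) | e ∈ chords n ∧ u z e < 0} :=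
    ⟨hS03chord, hneg⟩
  have hle : Set.ncard {e : Sym2 (ZMod n) | e ∈ chords n ∧ u w e < 0}
      ≤ Set.ncard ({e : Sym2 (ZMod n) | e ∈ chords n ∧ u z e < 0} \ {s((0 : ZMod n), 3)}) :=
    Set.ncard_le_ncard_of_injOn Φ hmaps hinj (Set.toFinite _)
  have hlt : Set.ncard ({e : Sym2 (ZMod n) | e ∈ chords n ∧ u z e < 0} \ {s((0 : ZMod n), 3)})
      < Set.ncard {e : Sym2 (ZMod n) | e ∈ chords n ∧ u z e < 0} :=
    Set.ncard_diff_singleton_lt_of_mem hS03B (Set.toFinite _)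
  exact lt_of_le_of_lt hle hlt

end M0n
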